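/- For every nonzero ordinal α, the following are equivalent: (1) α is additively indecomposable, i.e., whenever α = β + γ, either β = α or γ = α; (2) α is strongly indecomposable, i.e., whenever α is an instance of a sum of ordinals β and γ, either β = α or γ = α. -/

import Mathlib

universe u
namespace NaturalOps

noncomputable def nadd (a b : Ordinal.{u}) : Ordinal.{u} :=
  sInf {c | (∀ a' (_ : a' < a), nadd a' b < c) ∧ ∀ b' (_ : b' < b), nadd a b' < c}
termination_by (a, b)
decreasing_by
  · exact Prod.Lex.left _ _ ‹_›
  · exact Prod.Lex.right _ ‹_›

infixl:65 " ♯ " => nadd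

theorem nadd_mem (a b : Ordinal.{u}) :
    (∀ a' (_ : a' < a), a' ♯ b < a ♯ b) ∧ ∀ b' (_ : b' < b), a ♯ b' < a ♯ b := by
  have hne : ({c | (∀ a' (_ : a' < a), a' ♯ b < c) ∧ ∀ b' (_ : b' < b), a ♯ b' < c} :
      Set Ordinal.{u}).Nonempty := by
    obtain ⟨M, hM⟩ := Ordinal.bddAbove_of_small (s := Set.range
      (Sum.elim (fun a' : Set.Iio a => (a' : Ordinal) ♯ b) (fun b' : Set.Iio b => a ♯ b')))
    refine ⟨Order.succ M, ?_, ?_⟩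
    · intro a' ha'
      exact Order.lt_succ_iff.2 (hM ⟨Sum.inl ⟨a', ha'⟩, rfl⟩)
    · intro b' hb'
      exact Order.lt_succ_iff.2 (hM ⟨Sum.inr ⟨b', hb'⟩, rfl⟩)
  have h := csInf_mem hne
  rw [← nadd] at h
  exact h

theorem nadd_le_iff {a b c : Ordinal.{u}} :
    a ♯ b ≤ c ↔ (∀ a' < a, a' ♯ b < c) ∧ ∀ b' < b, a ♯ b' < c := by
  constructor
  · intro h
    exact ⟨fun a' ha' => ((nadd_mem a b).1 a' ha').trans_le h,
      fun b' hb' => ((nadd_mem a b).2 b' hb').trans_le h⟩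
  · intro h
    rw [nadd]
    exact csInf_le' h

theorem nadd_lt_nadd_right {a b : Ordinal.{u}} (h : a < b) (c : Ordinal.{u}) : a ♯ c < b ♯ c :=
  (nadd_mem b c).1 a h

theorem nadd_lt_nadd_left {b c : Ordinal.{u}} (h : b < c) (a : Ordinal.{u}) : a ♯ b < a ♯ c :=
  (nadd_mem a c).2 b h

theorem zero_nadd (a : Ordinal.{u}) : 0 ♯ a = a := by
  induction a using Ordinal.induction with
  | _ a IH =>
    apply le_antisymm
    · rw [nadd_le_iff]
      refine ⟨fun a' ha' => absurd ha' (not_lt_of_ge zero_le), fun b' hb' => ?_⟩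
      rw [IH b' hb']
      exact hb'
    · apply le_of_forall_lt
      intro c hc
      rw [← IH c hc]
      exact nadd_lt_nadd_left hc 0

@[simp]
theorem nadd_zero (a : Ordinal.{u}) : a ♯ 0 = a := by
  induction a using Ordinal.induction with
  | _ a IH =>
    apply le_antisymm
    · rw [nadd_le_iff]
      refine ⟨fun a' ha' => ?_, fun b' hb' => absurd hb' (not_lt_of_ge zero_le)⟩
      rw [IH a' ha']
      exact ha'
    · apply le_of_forall_lt
      intro c hc
      rw [← IH c hc]
      exact nadd_lt_nadd_right hc 0

end NaturalOps

open Ordinal Set NaturalOps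

namespace SumInstanceAux

/-- Key technical bound: a natural sum of block decompositions. -/
theorem nadd_block {e : Ordinal.{u}}
    (he : ∀ x y : Ordinal.{u}, x < ω ^ e → y < ω ^ e → x ♯ y < ω ^ e) :
    ∀ (μ : Ordinal.{u}) (k j : ℕ) (r s : Ordinal.{u}), r < ω ^ e → s < ω ^ e →
      ω ^ e * ((k : Ordinal) + j) + (r ♯ s) ≤ μ →
      (ω ^ e * k + r) ♯ (ω ^ e * j + s) ≤ μ := by
  intro μ
  induction μ using Ordinal.induction with
  | _ μ IH =>
    intro k j r s hr hs hμ
    have hene : (ω ^ e : Ordinal) ≠ 0 := opow_ne_zero e omega0_ne_zero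
    rw [nadd_le_iff]
    constructor
    · intro a' ha'
      rcases lt_or_ge a' (ω ^ e * k) with h1 | h1
      · -- a' decomposes with a smaller block count
        have hdiv : a' / ω ^ e < (k : Ordinal) := (div_lt hene).2 h1
        obtain ⟨k', hk'⟩ := lt_omega0.1 (hdiv.trans (nat_lt_omega0 k))
        have hk'k : k' < k := by exact_mod_cast hk' ▸ hdiv
        have hmod : a' % ω ^ e < ω ^ e := mod_lt a' hene
        have hνμ : ω ^ e * ((k' : Ordinal) + j) + (a' % ω ^ e ♯ s) < μ := by
          have h2 : a' % ω ^ e ♯ s < ω ^ e := he _ _ hmod hs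
          have h3 : ω ^ e * ((k' : Ordinal) + j) + (a' % ω ^ e ♯ s)
              < ω ^ e * ((k' : Ordinal) + j) + ω ^ e := by
            exact add_lt_add_right h2 _
          have h4 : ω ^ e * ((k' : Ordinal) + j) + ω ^ e ≤ ω ^ e * ((k : Ordinal) + j) := by
            rw [← mul_succ]
            apply mul_le_mul_right
            rw [Order.succ_eq_add_one]
            have h5 : ((k' + j + 1 : ℕ) : Ordinal) ≤ ((k + j : ℕ) : Ordinal) :=
              Nat.cast_le.2 (Nat.succ_le_of_lt (Nat.add_lt_add_right hk'k j))
            push_cast at h5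
            exact h5
          exact lt_of_lt_of_le (h3.trans_le h4)
            (le_trans (le_self_add) hμ)
        have key := IH _ hνμ k' j (a' % ω ^ e) s hmod hs le_rfl
        have ha'eq : ω ^ e * k' + a' % ω ^ e = a' := by
          conv_rhs => rw [← div_add_mod a' (ω ^ e)]
          rw [hk']
        rw [ha'eq] at key
        exact key.trans_lt hνμ
      · -- a' = ω^e * k + r' with r' < r
        have ha'eq : ω ^ e * k + (a' - ω ^ e * k) = a' := Ordinal.add_sub_cancel_of_le h1
        have hr' : a' - ω ^ e * k < r := by
          rw [← ha'eq] at ha'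
          exact (add_lt_add_iff_left _).1 ha'
        have hνμ : ω ^ e * ((k : Ordinal) + j) + ((a' - ω ^ e * k) ♯ s) < μ := by
          exact lt_of_lt_of_le (add_lt_add_right (nadd_lt_nadd_right hr' s) _) hμ
        have key := IH _ hνμ k j (a' - ω ^ e * k) s (hr'.trans hr) hs le_rfl
        rw [ha'eq] at key
        exact key.trans_lt hνμ
    · intro b' hb'
      rcases lt_or_ge b' (ω ^ e * j) with h1 | h1
      · have hdiv : b' / ω ^ e < (j : Ordinal) := (div_lt hene).2 h1
        obtain ⟨j', hj'⟩ := lt_omega0.1 (hdiv.trans (nat_lt_omega0 j))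
        have hj'j : j' < j := by exact_mod_cast hj' ▸ hdiv
        have hmod : b' % ω ^ e < ω ^ e := mod_lt b' hene
        have hνμ : ω ^ e * ((k : Ordinal) + j') + (r ♯ b' % ω ^ e) < μ := by
          have h2 : r ♯ b' % ω ^ e < ω ^ e := he _ _ hr hmod
          have h3 : ω ^ e * ((k : Ordinal) + j') + (r ♯ b' % ω ^ e)
              < ω ^ e * ((k : Ordinal) + j') + ω ^ e := add_lt_add_right h2 _
          have h4 : ω ^ e * ((k : Ordinal) + j') + ω ^ e ≤ ω ^ e * ((k : Ordinal) + j) := by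
            rw [← mul_succ]
            apply mul_le_mul_right
            rw [Order.succ_eq_add_one]
            have h5 : ((k + j' + 1 : ℕ) : Ordinal) ≤ ((k + j : ℕ) : Ordinal) :=
              Nat.cast_le.2 (Nat.succ_le_of_lt (Nat.add_lt_add_left hj'j k))
            push_cast at h5
            exact h5
          exact lt_of_lt_of_le (h3.trans_le h4) (le_trans (le_self_add) hμ)
        have key := IH _ hνμ k j' r (b' % ω ^ e) hr hmod le_rfl
        have hb'eq : ω ^ e * j' + b' % ω ^ e = b' := by
          conv_rhs => rw [← div_add_mod b' (ω ^ e)]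
          rw [hj']
        rw [hb'eq] at key
        exact key.trans_lt hνμ
      · have hb'eq : ω ^ e * j + (b' - ω ^ e * j) = b' := Ordinal.add_sub_cancel_of_le h1
        have hs' : b' - ω ^ e * j < s := by
          rw [← hb'eq] at hb'
          exact (add_lt_add_iff_left _).1 hb'
        have hνμ : ω ^ e * ((k : Ordinal) + j) + (r ♯ (b' - ω ^ e * j)) < μ :=
          lt_of_lt_of_le (add_lt_add_right (nadd_lt_nadd_left hs' r) _) hμ
        have key := IH _ hνμ k j r (b' - ω ^ e * j) hr (hs'.trans hs) le_rfl
        rw [hb'eq] at key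
        exact key.trans_lt hνμ

/-- Powers of `ω` are closed under natural addition. -/
theorem principal_nadd_opow :
    ∀ e a b : Ordinal.{u}, a < ω ^ e → b < ω ^ e → a ♯ b < ω ^ e := by
  intro e
  induction e using Ordinal.induction with
  | _ e IH =>
    intro a b ha hb
    rcases eq_or_ne e 0 with rfl | he0
    · rw [opow_zero] at ha hb ⊢
      rw [lt_one_iff_zero] at ha hb
      subst ha; subst hb
      simpa using (zero_lt_one (α := Ordinal.{u}))
    rcases eq_or_ne a 0 with rfl | ha0
    · rwa [zero_nadd]
    rcases eq_or_ne b 0 with rfl | hb0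
    · rwa [nadd_zero]
    set E := max (log ω a) (log ω b) with hE
    have hEe : E < e :=
      max_lt ((lt_opow_iff_log_lt one_lt_omega0 ha0).1 ha)
        ((lt_opow_iff_log_lt one_lt_omega0 hb0).1 hb)
    have haE : a < ω ^ E * ω := by
      refine (lt_opow_succ_log_self one_lt_omega0 a).trans_le ?_
      rw [opow_succ]
      exact mul_le_mul_left (opow_le_opow_right omega0_pos (le_max_left _ _)) ω
    have hbE : b < ω ^ E * ω := by
      refine (lt_opow_succ_log_self one_lt_omega0 b).trans_le ?_
      rw [opow_succ]
      exact mul_le_mul_left (opow_le_opow_right omega0_pos (le_max_right _ _)) ω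
    have hene : (ω ^ E : Ordinal) ≠ 0 := opow_ne_zero E omega0_ne_zero
    obtain ⟨n', hn', han⟩ := (lt_mul_iff_of_isSuccLimit isSuccLimit_omega0).1 haE
    obtain ⟨m', hm', hbm⟩ := (lt_mul_iff_of_isSuccLimit isSuccLimit_omega0).1 hbE
    obtain ⟨k, hk⟩ := lt_omega0.1 (((div_lt hene).2 han).trans hn')
    obtain ⟨j, hj⟩ := lt_omega0.1 (((div_lt hene).2 hbm).trans hm')
    have hclosed := IH E hEe
    have key := nadd_block hclosed
      (ω ^ E * ((k : Ordinal) + j) + (a % ω ^ E ♯ b % ω ^ E)) k j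
      (a % ω ^ E) (b % ω ^ E) (mod_lt a hene) (mod_lt b hene) le_rfl
    have haeq : ω ^ E * k + a % ω ^ E = a := by
      conv_rhs => rw [← div_add_mod a (ω ^ E)]
      rw [hk]
    have hbeq : ω ^ E * j + b % ω ^ E = b := by
      conv_rhs => rw [← div_add_mod b (ω ^ E)]
      rw [hj]
    rw [haeq, hbeq] at key
    have h2 : ω ^ E * ((k : Ordinal) + j) + (a % ω ^ E ♯ b % ω ^ E)
        < ω ^ E * ω := by
      have h3 : a % ω ^ E ♯ b % ω ^ E < ω ^ E := hclosed _ _ (mod_lt a hene) (mod_lt b hene)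
      calc ω ^ E * ((k : Ordinal) + j) + (a % ω ^ E ♯ b % ω ^ E)
          < ω ^ E * ((k : Ordinal) + j) + ω ^ E := add_lt_add_right h3 _
        _ = ω ^ E * (((k : Ordinal) + j) + 1) := by rw [mul_add_one]
        _ < ω ^ E * ω := by
            apply mul_lt_mul_of_pos_left _ (pos_iff_ne_zero.2 hene)
            have : (((k + j + 1 : ℕ)) : Ordinal) < ω := nat_lt_omega0 _
            push_cast at this
            exact this
    have h4 : (ω ^ E * ω : Ordinal) ≤ ω ^ e := by
      rw [← opow_succ]
      exact opow_le_opow_right omega0_pos (Order.succ_le_of_lt hEe)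
    exact key.trans_lt (h2.trans_le h4)

/-- If `Iio α` is partitioned into pieces of order types `β` and `γ`,
then `α ≤ β ♯ γ`. -/
theorem le_nadd_of_partition {α β γ : Ordinal.{u}} (s : Set Ordinal.{u}) (hs : s ⊆ Iio α)
    (e1 : ↥s ≃o ↥(Iio β)) (e2 : ↥(Iio α \ s) ≃o ↥(Iio γ)) : α ≤ β ♯ γ := by
  have key : ∀ x : Ordinal.{u}, x < α → ∀ b c : Ordinal.{u},
      (∀ (a) (ha : a ∈ s), a < x → ((e1 ⟨a, ha⟩ : ↥(Iio β)) : Ordinal) < b) →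
      (∀ (y) (hy : y ∈ Iio α \ s), y < x → ((e2 ⟨y, hy⟩ : ↥(Iio γ)) : Ordinal) < c) →
      x ≤ b ♯ c := by
    intro x
    induction x using Ordinal.induction with
    | _ x IH =>
      intro hx b c hb hc
      apply le_of_forall_lt
      intro y hy
      have hyα : y < α := hy.trans hx
      by_cases hys : y ∈ s
      · have h1 : y ≤ ((e1 ⟨y, hys⟩ : ↥(Iio β)) : Ordinal) ♯ c := by
          refine IH y hy hyα _ c ?_ ?_
          · intro a ha hay
            have hlt : (⟨a, ha⟩ : ↥s) < ⟨y, hys⟩ := Subtype.mk_lt_mk.2 hay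
            exact Subtype.coe_lt_coe.2 (e1.lt_iff_lt.2 hlt)
          · intro z hz hzy
            exact hc z hz (hzy.trans hy)
        exact h1.trans_lt (nadd_lt_nadd_right (hb y hys hy) c)
      · have hyd : y ∈ Iio α \ s := ⟨hyα, hys⟩
        have h1 : y ≤ b ♯ ((e2 ⟨y, hyd⟩ : ↥(Iio γ)) : Ordinal) := by
          refine IH y hy hyα b _ ?_ ?_
          · intro a ha hay
            exact hb a ha (hay.trans hy)
          · intro z hz hzy
            have hlt : (⟨z, hz⟩ : ↥(Iio α \ s)) < ⟨y, hyd⟩ := Subtype.mk_lt_mk.2 hzy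
            exact Subtype.coe_lt_coe.2 (e2.lt_iff_lt.2 hlt)
        exact h1.trans_lt (nadd_lt_nadd_left (hc y hyd hy) b)
  apply le_of_forall_lt
  intro x hx
  by_cases hxs : x ∈ s
  · have h1 : x ≤ ((e1 ⟨x, hxs⟩ : ↥(Iio β)) : Ordinal) ♯ γ := by
      refine key x hx _ γ ?_ ?_
      · intro a ha hay
        have hlt : (⟨a, ha⟩ : ↥s) < ⟨x, hxs⟩ := Subtype.mk_lt_mk.2 hay
        exact Subtype.coe_lt_coe.2 (e1.lt_iff_lt.2 hlt)
      · intro z hz _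
        exact (e2 ⟨z, hz⟩).2
    exact h1.trans_lt (nadd_lt_nadd_right (e1 ⟨x, hxs⟩).2 γ)
  · have hxd : x ∈ Iio α \ s := ⟨hx, hxs⟩
    have h1 : x ≤ β ♯ ((e2 ⟨x, hxd⟩ : ↥(Iio γ)) : Ordinal) := by
      refine key x hx β _ ?_ ?_
      · intro a ha _
        exact (e1 ⟨a, ha⟩).2
      · intro z hz hzy
        have hlt : (⟨z, hz⟩ : ↥(Iio α \ s)) < ⟨x, hxd⟩ := Subtype.mk_lt_mk.2 hzy
        exact Subtype.coe_lt_coe.2 (e2.lt_iff_lt.2 hlt)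
    exact h1.trans_lt (nadd_lt_nadd_left (e2 ⟨x, hxd⟩).2 β)

/-- If there is a strictly monotone assignment of ordinals `< α` to the ordinals `< β`,
then `β ≤ α`. -/
theorem ord_le_of_mono {β α : Ordinal.{u}} (F : ∀ x : Ordinal.{u}, x < β → Ordinal.{u})
    (hmono : ∀ x y (hx : x < β) (hy : y < β), x < y → F x hx < F y hy)
    (hlt : ∀ x hx, F x hx < α) : β ≤ α := by
  have hself : ∀ x (hx : x < β), x ≤ F x hx := by
    intro x
    induction x using Ordinal.induction with
    | _ x IH =>
      intro hx
      apply le_of_forall_lt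
      intro y hy
      exact (IH y hy (hy.trans hx)).trans_lt (hmono y x _ hx hy)
  apply le_of_forall_lt
  intro x hx
  exact (hself x hx).trans_lt (hlt x hx)

end SumInstanceAux

/-- `γ` is an *instance of a sum* of `α` and `β`: the set of ordinals below `γ` can be
partitioned into two subsets whose induced orders have order types `α` and `β`
(equivalently, are order-isomorphic to the sets of ordinals below `α` resp. `β`). -/
def IsSumInstance (γ α β : Ordinal.{u}) : Prop :=
  ∃ s : Set Ordinal.{u}, s ⊆ Set.Iio γ ∧
    Nonempty (↥s ≃o ↥(Set.Iio α)) ∧ Nonempty (↥(Set.Iio γ \ s) ≃o ↥(Set.Iio β))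

/-- A nonzero ordinal is additively indecomposable if and only if it is strongly
indecomposable (whenever it is an instance of a sum of `β` and `γ`, one of the two
summands equals it). -/
theorem additively_indecomposable_iff_strongly_indecomposable
    (α : Ordinal.{u}) (hα : α ≠ 0) :
    (∀ β γ : Ordinal.{u}, α = β + γ → β = α ∨ γ = α) ↔
    (∀ β γ : Ordinal.{u}, IsSumInstance α β γ → β = α ∨ γ = α) := by
  constructor
  · rintro hI β γ ⟨s, hs, ⟨e1⟩, ⟨e2⟩⟩
    have hβα : β ≤ α := by
      refine SumInstanceAux.ord_le_of_mono
        (fun x hx => ((e1.symm ⟨x, hx⟩ : ↥s) : Ordinal)) ?_ ?_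
      · intro x y hx hy hxy
        exact Subtype.coe_lt_coe.2 (e1.symm.lt_iff_lt.2 (Subtype.mk_lt_mk.2 hxy))
      · intro x hx
        exact hs (e1.symm ⟨x, hx⟩).2
    have hγα : γ ≤ α := by
      refine SumInstanceAux.ord_le_of_mono
        (fun x hx => ((e2.symm ⟨x, hx⟩ : ↥(Set.Iio α \ s)) : Ordinal)) ?_ ?_
      · intro x y hx hy hxy
        exact Subtype.coe_lt_coe.2 (e2.symm.lt_iff_lt.2 (Subtype.mk_lt_mk.2 hxy))
      · intro x hx
        exact (e2.symm ⟨x, hx⟩).2.1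
    have hprin : Ordinal.IsPrincipal (· + ·) α := by
      rw [Ordinal.isPrincipal_add_iff_add_left_eq_self]
      intro b hb
      rcases hI b (α - b) (Ordinal.add_sub_cancel_of_le hb.le).symm with h | h
      · exact absurd h hb.ne
      · conv_lhs => rw [← h]
        exact Ordinal.add_sub_cancel_of_le hb.le
    rcases Ordinal.principal_add_iff_zero_or_omega0_opow.1 hprin with rfl | ⟨δ, rfl⟩
    · exact absurd rfl hα
    · have hle := SumInstanceAux.le_nadd_of_partition s hs e1 e2
      rcases hβα.lt_or_eq with hβ | hβ
      · rcases hγα.lt_or_eq with hγ | hγ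
        · exact absurd hle (SumInstanceAux.principal_nadd_opow δ β γ hβ hγ).not_ge
        · exact Or.inr hγ
      · exact Or.inl hβ
  · intro hS β γ hsum
    apply hS
    have hβα : β ≤ α := hsum ▸ le_self_add
    refine ⟨Set.Iio β, fun x hx => hx.trans_le hβα, ⟨OrderIso.refl _⟩, ?_⟩
    set F : ↥(Set.Iio γ) → ↥(Set.Iio α \ Set.Iio β) := fun x =>
      ⟨β + x, by
        constructor
        · show β + (x : Ordinal) < α
          rw [hsum]
          exact add_lt_add_right x.2 β
        · show ¬ β + (x : Ordinal) < β
          exact not_lt.2 (le_self_add)⟩ with hF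
    have hmono : StrictMono F := by
      intro x y hxy
      exact Subtype.mk_lt_mk.2 (add_lt_add_right (Subtype.coe_lt_coe.2 hxy) β)
    have hsurj : Function.Surjective F := by
      rintro ⟨y, hy1, hy2⟩
      have hby : β ≤ y := not_lt.1 hy2
      have hylt : y - β < γ := by
        rw [← add_lt_add_iff_left β, Ordinal.add_sub_cancel_of_le hby, ← hsum]
        exact hy1
      exact ⟨⟨y - β, hylt⟩, Subtype.ext (Ordinal.add_sub_cancel_of_le hby)⟩
    exact ⟨(StrictMono.orderIsoOfSurjective F hmono hsurj).symm⟩
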